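/- Let T ≥ 1, g : ℝ^T → ℝ strictly convex and differentiable, and s : ℝ^T → ℝ^T strictly decreasing in the monotone-operator sense (⟨s(p) − s(q), p − q⟩ < 0 whenever p ≠ q). Fix p* ∈ ℝ^T and define V(p) = g(s(p)) − g(s(p*)) − ⟨∇g(s(p*)), s(p) − s(p*)⟩ − ⟨s(p) − s(p*), p − p*⟩. Then V(p*) = 0 and V(p) > 0 for every p ≠ p*. -/

import Mathlib

open RealInnerProductSpace

/-- First-order condition for a convex differentiable function:
`g y ≥ g x + ⟪∇g x, y - x⟫`. -/
lemma convex_grad_ineq {n : ℕ} (g : EuclideanSpace ℝ (Fin n) → ℝ)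
    (hg : ConvexOn ℝ Set.univ g) (hd : Differentiable ℝ g)
    (x y : EuclideanSpace ℝ (Fin n)) :
    g x + ⟪gradient g x, y - x⟫ ≤ g y := by
  by_cases hxy : y = x
  · simp [hxy]
  · set L : ℝ → EuclideanSpace ℝ (Fin n) := fun t => x + t • (y - x) with hL
    have hline : ∀ t : ℝ, HasDerivAt L (y - x) t := by
      intro t
      simpa [hL] using ((hasDerivAt_id t).smul_const (y - x)).const_add x
    have hφ : ∀ t : ℝ, HasDerivAt (g ∘ L) ⟪gradient g (L t), y - x⟫ t := by
      intro t
      have hg' : HasFDerivAt g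
          ((InnerProductSpace.toDual ℝ _) (gradient g (L t))) (L t) :=
        hasGradientAt_iff_hasFDerivAt.mp (hd (L t)).hasGradientAt
      simpa using hg'.comp_hasDerivAt t (hline t)
    have hconv : ConvexOn ℝ Set.univ (g ∘ L) := by
      have := hg.comp_affineMap (AffineMap.lineMap x y : ℝ →ᵃ[ℝ] _)
      have hEq : (g ∘ (AffineMap.lineMap x y : ℝ →ᵃ[ℝ] _)) = g ∘ L := by
        funext t
        simp [hL, AffineMap.lineMap_apply, Function.comp]
        congr 1
        module
      simpa [hEq] using this
    have hslope := hconv.le_slope_of_hasDerivAt (x := (0:ℝ)) (y := (1:ℝ))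
      (Set.mem_univ _) (Set.mem_univ _) one_pos (hφ 0)
    have h0 : L 0 = x := by simp [hL]
    have h1 : L 1 = y := by simp [hL]
    rw [slope_def_field] at hslope
    simp only [Function.comp, h0, h1] at hslope
    have : ⟪gradient g x, y - x⟫ ≤ g y - g x := by
      simpa [h0] using hslope
    linarith

/-- Positive definiteness of the Bregman-divergence-based Lyapunov function of Theorem 2,
case 2: with `g` strictly convex and differentiable and `s` strictly decreasing in the
monotone-operator sense, the function
`V(p) = g(s(p)) - g(s(p*)) - ⟨∇g(s(p*)), s(p) - s(p*)⟩ - ⟨s(p) - s(p*), p - p*⟩`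
satisfies `V(p*) = 0` and `V(p) > 0` for every `p ≠ p*`. -/
theorem bregman_lyapunov_posdef
    (T : ℕ) (hT : 1 ≤ T)
    (g : EuclideanSpace ℝ (Fin T) → ℝ)
    (hgconv : StrictConvexOn ℝ Set.univ g) (hgdiff : Differentiable ℝ g)
    (s : EuclideanSpace ℝ (Fin T) → EuclideanSpace ℝ (Fin T))
    (hdec : ∀ p q : EuclideanSpace ℝ (Fin T), p ≠ q → ⟪s p - s q, p - q⟫ < 0)
    (pstar : EuclideanSpace ℝ (Fin T))
    (V : EuclideanSpace ℝ (Fin T) → ℝ)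
    (hV : ∀ p, V p = g (s p) - g (s pstar)
      - ⟪gradient g (s pstar), s p - s pstar⟫ - ⟪s p - s pstar, p - pstar⟫) :
    V pstar = 0 ∧ ∀ p, p ≠ pstar → 0 < V p := by
  constructor
  · simp [hV pstar]
  · intro p hp
    have hbreg := convex_grad_ineq g hgconv.convexOn hgdiff (s pstar) (s p)
    have hcross : ⟪s p - s pstar, p - pstar⟫ < 0 := hdec p pstar hp
    rw [hV p]
    linarith
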